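/- For every integer N ≥ 1 and all coefficients γ₁,…,γ_N ∈ ℂ, the quantum angular momentum operator Ĉ := q̂₁p̂₂ − q̂₂p̂₁ commutes with the generalized quantum Zernike Hamiltonian Ĥ_N := p̂₁² + p̂₂² + Σ_{k=1}^N γ_k (q̂₁p̂₁ + q̂₂p̂₂)^k, i.e. ⁅Ĉ, Ĥ_N⁆ = 0 in End(V). -/

import Mathlib

noncomputable section

/-- `V = ℂ[q₁,q₂]`, the polynomial ring in two variables over `ℂ`. -/
abbrev V : Type := MvPolynomial (Fin 2) ℂ

/-- `q̂₁`: multiplication by `q₁`. -/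
noncomputable def q1 : Module.End ℂ V := LinearMap.mulLeft ℂ (MvPolynomial.X 0)

/-- `q̂₂`: multiplication by `q₂`. -/
noncomputable def q2 : Module.End ℂ V := LinearMap.mulLeft ℂ (MvPolynomial.X 1)

/-- `p̂₁ = −i ∂/∂q₁`. -/
noncomputable def p1 : Module.End ℂ V :=
  (-Complex.I) • (MvPolynomial.pderiv (0 : Fin 2)).toLinearMap

/-- `p̂₂ = −i ∂/∂q₂`. -/
noncomputable def p2 : Module.End ℂ V :=
  (-Complex.I) • (MvPolynomial.pderiv (1 : Fin 2)).toLinearMap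

/-- `D = q̂₁p̂₁ + q̂₂p̂₂`. -/
noncomputable def Dop : Module.End ℂ V := q1 * p1 + q2 * p2

/-- `Ĉ = q̂₁p̂₂ − q̂₂p̂₁`, the quantum angular momentum. -/
noncomputable def Cop : Module.End ℂ V := q1 * p2 - q2 * p1

open MvPolynomial in
lemma pd_comm (f : V) : pderiv (0 : Fin 2) (pderiv 1 f) = pderiv 1 (pderiv 0 f) := by
  induction f using MvPolynomial.induction_on' with
  | monomial s a =>
      simp [pderiv_monomial, Finsupp.sub_apply, Finsupp.single_apply, tsub_right_comm]
      ring_nf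
  | add p q hp hq => simp [hp, hq]

open MvPolynomial in
lemma commCD : Commute Cop Dop := by
  show _ = _
  apply LinearMap.ext; intro f
  simp [Cop, Dop, q1, q2, p1, p2, Module.End.mul_apply, pderiv_mul,
    pderiv_X_self, pderiv_X_of_ne, pd_comm, smul_eq_C_mul, smul_smul]
  ring

open MvPolynomial in
lemma commCP : Commute Cop (p1 ^ 2 + p2 ^ 2) := by
  show _ = _
  apply LinearMap.ext; intro f
  simp [Cop, q1, q2, p1, p2, pow_two, Module.End.mul_apply, pderiv_mul,
    pderiv_X_self, pderiv_X_of_ne, pd_comm, smul_eq_C_mul, smul_smul]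
  ring

/-- the angular momentum `Ĉ` commutes with the generalized quantum
Zernike Hamiltonian `Ĥ_N = p̂₁² + p̂₂² + Σ_{k=1}^N γ_k D^k` for every `N ≥ 1`
and all coefficients `γ_k ∈ ℂ`. -/
theorem zernike_angular_momentum_commutes (N : ℕ) (hN : 1 ≤ N) (γ : ℕ → ℂ) :
    Cop * (p1 ^ 2 + p2 ^ 2 + ∑ k ∈ Finset.Icc 1 N, γ k • Dop ^ k)
      - (p1 ^ 2 + p2 ^ 2 + ∑ k ∈ Finset.Icc 1 N, γ k • Dop ^ k) * Cop = 0 := by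
  have h : Commute Cop (p1 ^ 2 + p2 ^ 2 + ∑ k ∈ Finset.Icc 1 N, γ k • Dop ^ k) :=
    commCP.add_right
      (Commute.sum_right _ _ _ fun k _ => (commCD.pow_right k).smul_right (γ k))
  exact sub_eq_zero_of_eq h
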